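/- Let ψ : ℝⁿ × (0,∞) → [0, ∞) be measurable with ψ ≤ B for a constant B ≥ 1, let f, g : ℝⁿ → [0,∞) be measurable with g ≥ f, f ∈ L^p for p > 1, and g ∈ L^p. Assume ψ(x,t) = 0 for t > g(x), ψ(x,t) ≥ 1 for t < f(x), and ∫_{ℝⁿ} ∫_0^∞ t^{p-1} ψ(x,t) dt dx = ∫_{ℝⁿ} ∫_0^∞ t^{p-2} ψ(x,t) f(x) dt dx. Then (B/p)(‖g‖_p^p − ‖f‖_p^p) ≥ ‖f‖_p^p / (p(p−1)). -/

import Mathlib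

open MeasureTheory
open Set

lemma measurable_rpow_const' (r : ℝ) : Measurable fun t : ℝ => t ^ r := by fun_prop

lemma rpow_intOn {r b : ℝ} (hr : -1 < r) (hb : 0 ≤ b) :
    IntegrableOn (fun t : ℝ => t ^ r) (Ioc 0 b) :=
  (intervalIntegrable_iff_integrableOn_Ioc_of_le hb).mp
    (intervalIntegral.intervalIntegrable_rpow' hr)

lemma ioc_rpow_int {r c : ℝ} (hr : -1 < r) (hc : 0 ≤ c) :
    ∫ t in Ioc (0:ℝ) c, t ^ r = c ^ (r+1) / (r+1) := by
  rw [← intervalIntegral.integral_of_le hc, integral_rpow (Or.inl hr),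
    Real.zero_rpow (by linarith), sub_zero]

lemma hmul' {b q : ℝ} (hb : 0 ≤ b) (hq1 : 0 < q) : b ^ (q - 1) * b = b ^ q := by
  rcases eq_or_lt_of_le hb with h | h
  · simp [← h, Real.zero_rpow hq1.ne']
  · rw [← Real.rpow_add_one h.ne' (q-1), sub_add_cancel]

section
variable {p B a b : ℝ} {φ : ℝ → ℝ}

lemma int_A (hp : 1 < p) (hφ0 : ∀ t > (0:ℝ), 0 ≤ φ t)
    (hφB : ∀ t > (0:ℝ), φ t ≤ B) (hb : 0 ≤ b) (hz : ∀ t > (0:ℝ), b < t → φ t = 0)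
    (hφm : Measurable φ) :
    IntegrableOn (fun t => t ^ (p-1) * φ t) (Ioi 0) := by
  have hD : IntegrableOn ((Ioc (0:ℝ) b).indicator fun t => B * t ^ (p-1)) (Ioi 0) :=
    (IntegrableOn.integrable_indicator ((rpow_intOn (by linarith) hb).const_mul B)
      measurableSet_Ioc).integrableOn
  refine hD.mono' (((measurable_rpow_const' _).mul hφm).aestronglyMeasurable) ?_
  refine (ae_restrict_iff' measurableSet_Ioi).mpr (ae_of_all _ fun t ht => ?_)
  rcases le_or_gt t b with h | h
  · have hi : (Ioc (0:ℝ) b).indicator (fun t => B * t ^ (p-1)) t = B * t ^ (p-1) :=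
      indicator_of_mem (show t ∈ Ioc (0:ℝ) b from ⟨ht, h⟩) _
    rw [hi, Real.norm_eq_abs,
      abs_of_nonneg (mul_nonneg (Real.rpow_nonneg (le_of_lt ht) _) (hφ0 t ht)), mul_comm B]
    exact mul_le_mul_of_nonneg_left (hφB t ht) (Real.rpow_nonneg (le_of_lt ht) _)
  · have : t ∉ Ioc (0:ℝ) b := fun hc => absurd hc.2 (not_le.mpr h)
    simp [indicator_of_notMem this, hz t ht h]

lemma int_C (hp : 1 < p) (hφ0 : ∀ t > (0:ℝ), 0 ≤ φ t)
    (hφB : ∀ t > (0:ℝ), φ t ≤ B) (ha : 0 ≤ a) (hab : a ≤ b)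
    (hz : ∀ t > (0:ℝ), b < t → φ t = 0) (hφm : Measurable φ) :
    IntegrableOn (fun t => t ^ (p-2) * φ t * a) (Ioi 0) := by
  have hb : 0 ≤ b := ha.trans hab
  have hD : IntegrableOn ((Ioc (0:ℝ) b).indicator fun t => B * b * t ^ (p-2)) (Ioi 0) :=
    (IntegrableOn.integrable_indicator ((rpow_intOn (by linarith) hb).const_mul (B * b))
      measurableSet_Ioc).integrableOn
  refine hD.mono' (((measurable_rpow_const' _).mul hφm).mul_const a).aestronglyMeasurable ?_
  refine (ae_restrict_iff' measurableSet_Ioi).mpr (ae_of_all _ fun t ht => ?_)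
  rcases le_or_gt t b with h | h
  · have hi : (Ioc (0:ℝ) b).indicator (fun t => B * b * t ^ (p-2)) t = B * b * t ^ (p-2) :=
      indicator_of_mem (show t ∈ Ioc (0:ℝ) b from ⟨ht, h⟩) _
    rw [hi, Real.norm_eq_abs,
      abs_of_nonneg (mul_nonneg (mul_nonneg (Real.rpow_nonneg (le_of_lt ht) _)
        (hφ0 t ht)) ha)]
    have hB0 : (0:ℝ) ≤ B := (hφ0 1 one_pos).trans (hφB 1 one_pos)
    have h2 : (0:ℝ) ≤ t ^ (p-2) := Real.rpow_nonneg (le_of_lt ht) _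
    have h3 : t ^ (p-2) * φ t ≤ t ^ (p-2) * B := mul_le_mul_of_nonneg_left (hφB t ht) h2
    have h1 : t ^ (p-2) * φ t * a ≤ t ^ (p-2) * B * b :=
      mul_le_mul h3 hab ha (mul_nonneg h2 hB0)
    nlinarith
  · have : t ∉ Ioc (0:ℝ) b := fun hc => absurd hc.2 (not_le.mpr h)
    simp [indicator_of_notMem this, hz t ht h]

end

section
variable {p B a b : ℝ} {φ : ℝ → ℝ}

lemma A_nonneg (hp : 1 < p) (hφ0 : ∀ t > (0:ℝ), 0 ≤ φ t) :
    0 ≤ ∫ t in Ioi (0:ℝ), t ^ (p-1) * φ t :=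
  setIntegral_nonneg measurableSet_Ioi fun t ht =>
    mul_nonneg (Real.rpow_nonneg (le_of_lt ht) _) (hφ0 t ht)

lemma C_nonneg (hp : 1 < p) (hφ0 : ∀ t > (0:ℝ), 0 ≤ φ t) (ha : 0 ≤ a) :
    0 ≤ ∫ t in Ioi (0:ℝ), t ^ (p-2) * φ t * a :=
  setIntegral_nonneg measurableSet_Ioi fun t ht =>
    mul_nonneg (mul_nonneg (Real.rpow_nonneg (le_of_lt ht) _) (hφ0 t ht)) ha

lemma A_ub (hp : 1 < p) (hφ0 : ∀ t > (0:ℝ), 0 ≤ φ t)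
    (hφB : ∀ t > (0:ℝ), φ t ≤ B) (hb : 0 ≤ b) (hz : ∀ t > (0:ℝ), b < t → φ t = 0)
    (hφm : Measurable φ) :
    ∫ t in Ioi (0:ℝ), t ^ (p-1) * φ t ≤ B / p * b ^ p := by
  have hD : IntegrableOn ((Ioc (0:ℝ) b).indicator fun t => B * t ^ (p-1)) (Ioi 0) :=
    (IntegrableOn.integrable_indicator ((rpow_intOn (by linarith) hb).const_mul B)
      measurableSet_Ioc).integrableOn
  have step : ∫ t in Ioi (0:ℝ), t ^ (p-1) * φ t
      ≤ ∫ t in Ioi (0:ℝ), (Ioc (0:ℝ) b).indicator (fun t => B * t ^ (p-1)) t := by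
    refine setIntegral_mono_on (int_A hp hφ0 hφB hb hz hφm) hD measurableSet_Ioi
      fun t ht => ?_
    rcases le_or_gt t b with h | h
    · rw [indicator_of_mem (show t ∈ Ioc (0:ℝ) b from ⟨ht, h⟩) _, mul_comm B]
      exact mul_le_mul_of_nonneg_left (hφB t ht) (Real.rpow_nonneg (le_of_lt ht) _)
    · have hni : t ∉ Ioc (0:ℝ) b := fun hc => absurd hc.2 (not_le.mpr h)
      simp [indicator_of_notMem hni, hz t ht h]
  have e1 : ∫ t in Ioi (0:ℝ), (Ioc (0:ℝ) b).indicator (fun t => B * t ^ (p-1)) t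
      = ∫ t in Ioc (0:ℝ) b, B * t ^ (p-1) := by
    rw [setIntegral_indicator measurableSet_Ioc,
      inter_eq_right.mpr Ioc_subset_Ioi_self]
  have e2 : ∫ t in Ioc (0:ℝ) b, B * t ^ (p-1) = B / p * b ^ p := by
    rw [integral_const_mul, ioc_rpow_int (by linarith) hb]
    have : p - 1 + 1 = p := by ring
    rw [this]; ring
  calc _ ≤ _ := step
    _ = _ := e1
    _ = _ := e2

lemma C_ub (hp : 1 < p) (hφ0 : ∀ t > (0:ℝ), 0 ≤ φ t)
    (hφB : ∀ t > (0:ℝ), φ t ≤ B) (ha : 0 ≤ a) (hab : a ≤ b)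
    (hz : ∀ t > (0:ℝ), b < t → φ t = 0) (hφm : Measurable φ) :
    ∫ t in Ioi (0:ℝ), t ^ (p-2) * φ t * a ≤ B / (p-1) * b ^ p := by
  have hb : 0 ≤ b := ha.trans hab
  have hB0 : (0:ℝ) ≤ B := (hφ0 1 one_pos).trans (hφB 1 one_pos)
  have hD : IntegrableOn ((Ioc (0:ℝ) b).indicator fun t => B * b * t ^ (p-2)) (Ioi 0) :=
    (IntegrableOn.integrable_indicator ((rpow_intOn (by linarith) hb).const_mul (B * b))
      measurableSet_Ioc).integrableOn
  have step : ∫ t in Ioi (0:ℝ), t ^ (p-2) * φ t * a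
      ≤ ∫ t in Ioi (0:ℝ), (Ioc (0:ℝ) b).indicator (fun t => B * b * t ^ (p-2)) t := by
    refine setIntegral_mono_on (int_C hp hφ0 hφB ha hab hz hφm) hD measurableSet_Ioi
      fun t ht => ?_
    rcases le_or_gt t b with h | h
    · rw [indicator_of_mem (show t ∈ Ioc (0:ℝ) b from ⟨ht, h⟩) _]
      have h2 : (0:ℝ) ≤ t ^ (p-2) := Real.rpow_nonneg (le_of_lt ht) _
      have h3 : t ^ (p-2) * φ t ≤ t ^ (p-2) * B := mul_le_mul_of_nonneg_left (hφB t ht) h2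
      have h1 : t ^ (p-2) * φ t * a ≤ t ^ (p-2) * B * b :=
        mul_le_mul h3 hab ha (mul_nonneg h2 hB0)
      nlinarith
    · have hni : t ∉ Ioc (0:ℝ) b := fun hc => absurd hc.2 (not_le.mpr h)
      simp [indicator_of_notMem hni, hz t ht h]
  have e1 : ∫ t in Ioi (0:ℝ), (Ioc (0:ℝ) b).indicator (fun t => B * b * t ^ (p-2)) t
      = ∫ t in Ioc (0:ℝ) b, B * b * t ^ (p-2) := by
    rw [setIntegral_indicator measurableSet_Ioc,
      inter_eq_right.mpr Ioc_subset_Ioi_self]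
  have e2 : ∫ t in Ioc (0:ℝ) b, B * b * t ^ (p-2) = B / (p-1) * b ^ p := by
    rw [integral_const_mul, ioc_rpow_int (by linarith) hb]
    have h4 : p - 2 + 1 = p - 1 := by ring
    rw [h4]
    have e := hmul' hb (by linarith : (0:ℝ) < p)
    have hp1 : p - 1 ≠ 0 := by intro h; exact absurd (by linarith : p = 1) (by linarith [hp])
    field_simp
    linear_combination B * e
  calc _ ≤ _ := step
    _ = _ := e1
    _ = _ := e2

end

lemma rpow_succ' {t : ℝ} (ht : 0 < t) (p : ℝ) : t ^ (p-1) = t ^ (p-2) * t := by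
  rw [← Real.rpow_add_one ht.ne' (p-2)]; congr 1; ring

section
variable {p B a b : ℝ} {φ : ℝ → ℝ}

lemma key_ineq (hp : 1 < p) (hB : 1 ≤ B) (hφ0 : ∀ t > (0:ℝ), 0 ≤ φ t)
    (hφB : ∀ t > (0:ℝ), φ t ≤ B) (ha : 0 ≤ a) (hab : a ≤ b)
    (hz : ∀ t > (0:ℝ), b < t → φ t = 0) (h1 : ∀ t > (0:ℝ), t < a → 1 ≤ φ t)
    (hφm : Measurable φ) :
    a ^ p / (p * (p-1)) - B / p * (b ^ p - a ^ p)
      ≤ (∫ t in Ioi (0:ℝ), t ^ (p-2) * φ t * a) - ∫ t in Ioi (0:ℝ), t ^ (p-1) * φ t := by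
  have hb : 0 ≤ b := ha.trans hab
  have hB0 : (0:ℝ) ≤ B := by linarith
  have hp0 : (0:ℝ) < p := by linarith
  have hp1 : (0:ℝ) < p - 1 := by linarith
  have hA := int_A hp hφ0 hφB hb hz hφm
  have hC := int_C hp hφ0 hφB ha hab hz hφm
  have hIocsub : Ioc a b ⊆ Ioc 0 b := Ioc_subset_Ioc ha le_rfl
  -- inner functions
  set L1 : ℝ → ℝ := (Ioo (0:ℝ) a).indicator (fun t => t ^ (p-2) * (a - t)) with hL1
  set L2 : ℝ → ℝ := (Icc a b).indicator (fun t => B * (t ^ (p-2) * (a - t))) with hL2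
  set L3 : ℝ → ℝ := (Icc a b).indicator (fun t => -(B * t ^ (p-1))) with hL3
  -- integrability of L1
  have ibase1 : IntegrableOn (fun t : ℝ => a * t ^ (p-2) - t ^ (p-1)) (Ioo 0 a) :=
    (((rpow_intOn (by linarith) ha).mono_set Ioo_subset_Ioc_self).const_mul a).sub
      ((rpow_intOn (by linarith) ha).mono_set Ioo_subset_Ioc_self)
  have inner1 : IntegrableOn (fun t : ℝ => t ^ (p-2) * (a - t)) (Ioo 0 a) := by
    refine ibase1.congr ?_
    refine (ae_restrict_iff' measurableSet_Ioo).mpr (ae_of_all _ fun t ht => ?_)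
    show a * t ^ (p-2) - t ^ (p-1) = t ^ (p-2) * (a - t)
    rw [rpow_succ' ht.1 p]; ring
  have iL1 : IntegrableOn L1 (Ioi 0) :=
    (IntegrableOn.integrable_indicator inner1 measurableSet_Ioo).integrableOn
  -- integrability of L2
  have ibase2 : IntegrableOn (fun t : ℝ => B * a * t ^ (p-2) - B * t ^ (p-1)) (Ioc a b) :=
    (((rpow_intOn (by linarith) hb).mono_set hIocsub).const_mul (B * a)).sub
      (((rpow_intOn (by linarith) hb).mono_set hIocsub).const_mul B)
  have inner2 : IntegrableOn (fun t : ℝ => B * (t ^ (p-2) * (a - t))) (Icc a b) := by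
    rw [integrableOn_Icc_iff_integrableOn_Ioc]
    refine ibase2.congr ?_
    refine (ae_restrict_iff' measurableSet_Ioc).mpr (ae_of_all _ fun t ht => ?_)
    show B * a * t ^ (p-2) - B * t ^ (p-1) = B * (t ^ (p-2) * (a - t))
    rw [rpow_succ' (lt_of_le_of_lt ha ht.1) p]; ring
  have iL2 : IntegrableOn L2 (Ioi 0) :=
    (IntegrableOn.integrable_indicator inner2 measurableSet_Icc).integrableOn
  -- integrability of L3
  have inner3' : IntegrableOn (fun t : ℝ => t ^ (p-1)) (Icc a b) := by
    rw [integrableOn_Icc_iff_integrableOn_Ioc]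
    exact (rpow_intOn (by linarith) hb).mono_set hIocsub
  have inner3 : IntegrableOn (fun t : ℝ => -(B * t ^ (p-1))) (Icc a b) :=
    (inner3'.const_mul B).neg
  have iL3 : IntegrableOn L3 (Ioi 0) :=
    (IntegrableOn.integrable_indicator inner3 measurableSet_Icc).integrableOn
  -- Step I: pointwise lower bound
  have stepI : ∫ t in Ioi (0:ℝ), (L1 t + L2 t)
      ≤ ∫ t in Ioi (0:ℝ), (t ^ (p-2) * φ t * a - t ^ (p-1) * φ t) := by
    refine setIntegral_mono_on (iL1.add iL2) (hC.sub hA) measurableSet_Ioi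
      fun t ht => ?_
    have ht0 : (0:ℝ) < t := ht
    have h2 : (0:ℝ) ≤ t ^ (p-2) := Real.rpow_nonneg ht0.le _
    have hrw : t ^ (p-2) * φ t * a - t ^ (p-1) * φ t = t ^ (p-2) * φ t * (a - t) := by
      rw [rpow_succ' ht0 p]; ring
    rw [hrw]
    rcases lt_or_ge t a with h | h
    · have e1 : L1 t = t ^ (p-2) * (a - t) :=
        indicator_of_mem (show t ∈ Ioo (0:ℝ) a from ⟨ht0, h⟩) _
      have e2 : L2 t = 0 :=
        indicator_of_notMem (fun hc : t ∈ Icc a b => absurd hc.1 (not_le.mpr h)) _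
      rw [e1, e2, add_zero]
      have h3 := h1 t ht0 h
      nlinarith [mul_nonneg (mul_nonneg (sub_nonneg.mpr h3) h2) (sub_pos.mpr h).le]
    · have e1 : L1 t = 0 :=
        indicator_of_notMem (fun hc : t ∈ Ioo (0:ℝ) a => absurd hc.2 (not_lt.mpr h)) _
      rcases le_or_gt t b with h' | h'
      · have e2 : L2 t = B * (t ^ (p-2) * (a - t)) :=
          indicator_of_mem (show t ∈ Icc a b from ⟨h, h'⟩) _
        rw [e1, e2, zero_add]
        nlinarith [mul_nonneg (mul_nonneg (sub_nonneg.mpr (hφB t ht0)) h2)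
          (sub_nonneg.mpr h)]
      · have e2 : L2 t = 0 :=
          indicator_of_notMem (fun hc : t ∈ Icc a b => absurd hc.2 (not_le.mpr h')) _
        rw [e1, e2, hz t ht0 h']
        simp
  -- Step II: value of ∫ L1
  have eL1 : ∫ t in Ioi (0:ℝ), L1 t = a ^ p / (p * (p-1)) := by
    rw [hL1, setIntegral_indicator measurableSet_Ioo,
      inter_eq_right.mpr Ioo_subset_Ioi_self]
    have ec : ∫ t in Ioo (0:ℝ) a, t ^ (p-2) * (a - t)
        = ∫ t in Ioo (0:ℝ) a, (a * t ^ (p-2) - t ^ (p-1)) := by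
      refine setIntegral_congr_fun measurableSet_Ioo fun t ht => ?_
      rw [rpow_succ' ht.1 p]; ring
    rw [ec, integral_sub
      (((rpow_intOn (by linarith) ha).mono_set Ioo_subset_Ioc_self).const_mul a)
      ((rpow_intOn (by linarith) ha).mono_set Ioo_subset_Ioc_self)]
    rw [integral_const_mul, ← integral_Ioc_eq_integral_Ioo, ← integral_Ioc_eq_integral_Ioo,
      ioc_rpow_int (by linarith) ha, ioc_rpow_int (by linarith) ha]
    have h4 : p - 2 + 1 = p - 1 := by ring
    have h5 : p - 1 + 1 = p := by ring
    rw [h4, h5]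
    have e := hmul' ha hp0
    field_simp
    linear_combination p * e
  -- Step III: lower bound on ∫ L2
  have stepIII : ∫ t in Ioi (0:ℝ), L3 t ≤ ∫ t in Ioi (0:ℝ), L2 t := by
    refine setIntegral_mono_on iL3 iL2 measurableSet_Ioi fun t ht => ?_
    have ht0 : (0:ℝ) < t := ht
    have h2 : (0:ℝ) ≤ t ^ (p-2) := Real.rpow_nonneg ht0.le _
    rcases em (t ∈ Icc a b) with h | h
    · rw [hL2, hL3, indicator_of_mem h, indicator_of_mem h, rpow_succ' ht0 p]
      nlinarith [mul_nonneg (mul_nonneg hB0 h2) ha]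
    · rw [hL2, hL3, indicator_of_notMem h, indicator_of_notMem h]
  have eL3 : -(B / p * (b ^ p - a ^ p)) ≤ ∫ t in Ioi (0:ℝ), L3 t := by
    rw [hL3, setIntegral_indicator measurableSet_Icc, integral_neg, integral_const_mul]
    have hle : ∫ t in Ioi (0:ℝ) ∩ Icc a b, t ^ (p-1) ≤ (b ^ p - a ^ p) / p := by
      have m1 : ∫ t in Ioi (0:ℝ) ∩ Icc a b, t ^ (p-1) ≤ ∫ t in Icc a b, t ^ (p-1) := by
        refine setIntegral_mono_set inner3' ?_ (HasSubset.Subset.eventuallyLE inter_subset_right)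
        refine (ae_restrict_iff' measurableSet_Icc).mpr (ae_of_all _ fun t ht => ?_)
        exact Real.rpow_nonneg (ha.trans ht.1) _
      have m2 : ∫ t in Icc a b, t ^ (p-1) = (b ^ p - a ^ p) / p := by
        rw [integral_Icc_eq_integral_Ioc, ← intervalIntegral.integral_of_le hab,
          integral_rpow (Or.inl (by linarith))]
        have h5 : p - 1 + 1 = p := by ring
        rw [h5]
      linarith
    have := mul_le_mul_of_nonneg_left hle hB0
    have hr : B * ((b ^ p - a ^ p) / p) = B / p * (b ^ p - a ^ p) := by ring
    linarith [hr ▸ this]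
  -- assemble
  have ediff : (∫ t in Ioi (0:ℝ), t ^ (p-2) * φ t * a) - ∫ t in Ioi (0:ℝ), t ^ (p-1) * φ t
      = ∫ t in Ioi (0:ℝ), (t ^ (p-2) * φ t * a - t ^ (p-1) * φ t) :=
    (integral_sub hC hA).symm
  have esum : ∫ t in Ioi (0:ℝ), (L1 t + L2 t)
      = (∫ t in Ioi (0:ℝ), L1 t) + ∫ t in Ioi (0:ℝ), L2 t := integral_add iL1 iL2
  rw [ediff]
  linarith [stepI, esum, eL1, stepIII, eL3]

end


/-- Abstract core computation of Section 2: if `ψ ≤ B`, `ψ(x,t) = 0` for `t > g(x)`,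
`ψ(x,t) ≥ 1` for `t < f(x)`, `f ≤ g`, and
`∫∫ t^{p-1} ψ = ∫∫ t^{p-2} ψ f`, then `(B/p)(‖g‖_p^p − ‖f‖_p^p) ≥ ‖f‖_p^p/(p(p−1))`. -/
theorem stmt_11 (n : ℕ) (p : ℝ) (hp : 1 < p) (B : ℝ) (hB : 1 ≤ B)
    (ψ : EuclideanSpace ℝ (Fin n) → ℝ → ℝ)
    (hψmeas : Measurable (fun q : EuclideanSpace ℝ (Fin n) × ℝ => ψ q.1 q.2))
    (hψ0 : ∀ x, ∀ t > (0 : ℝ), 0 ≤ ψ x t)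
    (hub : ∀ x, ∀ t > (0 : ℝ), ψ x t ≤ B)
    (f g : EuclideanSpace ℝ (Fin n) → ℝ)
    (hf0 : ∀ x, 0 ≤ f x) (hfg : ∀ x, f x ≤ g x)
    (hfmeas : Measurable f) (hgmeas : Measurable g)
    (hfLp : MemLp f (ENNReal.ofReal p)) (hgLp : MemLp g (ENNReal.ofReal p))
    (hzero : ∀ x, ∀ t > (0 : ℝ), g x < t → ψ x t = 0)
    (hone : ∀ x, ∀ t > (0 : ℝ), t < f x → 1 ≤ ψ x t)
    (hbal : ∫ x, ∫ t in Set.Ioi (0 : ℝ), t ^ (p - 1) * ψ x t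
          = ∫ x, ∫ t in Set.Ioi (0 : ℝ), t ^ (p - 2) * ψ x t * f x) :
    (∫ x, f x ^ p) / (p * (p - 1)) ≤ (B / p) * ((∫ x, g x ^ p) - ∫ x, f x ^ p) := by
  have hp0 : (0:ℝ) < p := by linarith
  have hp1 : (0:ℝ) < p - 1 := by linarith
  have hg0 : ∀ x, 0 ≤ g x := fun x => (hf0 x).trans (hfg x)
  have hψxm : ∀ x, Measurable (ψ x) := fun x => hψmeas.comp measurable_prodMk_left
  -- integrability of f^p and g^p
  have hfp : Integrable (fun x => f x ^ p) := by
    have h := hfLp.integrable_norm_rpow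
      (by simp only [ne_eq, ENNReal.ofReal_eq_zero, not_le]; linarith) ENNReal.ofReal_ne_top
    rw [ENNReal.toReal_ofReal hp0.le] at h
    exact h.congr (ae_of_all _ fun x => by
      show ‖f x‖ ^ p = f x ^ p
      rw [Real.norm_eq_abs, abs_of_nonneg (hf0 x)])
  have hgp : Integrable (fun x => g x ^ p) := by
    have h := hgLp.integrable_norm_rpow
      (by simp only [ne_eq, ENNReal.ofReal_eq_zero, not_le]; linarith) ENNReal.ofReal_ne_top
    rw [ENNReal.toReal_ofReal hp0.le] at h
    exact h.congr (ae_of_all _ fun x => by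
      show ‖g x‖ ^ p = g x ^ p
      rw [Real.norm_eq_abs, abs_of_nonneg (hg0 x)])
  -- measurability of the inner integrals
  have hAm : StronglyMeasurable fun x => ∫ t in Set.Ioi (0:ℝ), t ^ (p-1) * ψ x t := by
    have hm : StronglyMeasurable
        (Function.uncurry fun (x : EuclideanSpace ℝ (Fin n)) (t : ℝ) =>
          t ^ (p-1) * ψ x t) :=
      (((measurable_rpow_const' (p-1)).comp measurable_snd).mul hψmeas).stronglyMeasurable
    exact hm.integral_prod_right
  have hCm : StronglyMeasurable fun x => ∫ t in Set.Ioi (0:ℝ), t ^ (p-2) * ψ x t * f x := by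
    have hm : StronglyMeasurable
        (Function.uncurry fun (x : EuclideanSpace ℝ (Fin n)) (t : ℝ) =>
          t ^ (p-2) * ψ x t * f x) :=
      ((((measurable_rpow_const' (p-2)).comp measurable_snd).mul hψmeas).mul
        (hfmeas.comp measurable_fst)).stronglyMeasurable
    exact hm.integral_prod_right
  -- integrability of the inner integrals
  have hAint : Integrable fun x => ∫ t in Set.Ioi (0:ℝ), t ^ (p-1) * ψ x t := by
    refine (hgp.const_mul (B/p)).mono' hAm.aestronglyMeasurable (ae_of_all _ fun x => ?_)
    rw [Real.norm_eq_abs, abs_of_nonneg (A_nonneg hp (hψ0 x))]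
    exact A_ub hp (hψ0 x) (hub x) (hg0 x) (hzero x) (hψxm x)
  have hCint : Integrable fun x => ∫ t in Set.Ioi (0:ℝ), t ^ (p-2) * ψ x t * f x := by
    refine (hgp.const_mul (B/(p-1))).mono' hCm.aestronglyMeasurable (ae_of_all _ fun x => ?_)
    rw [Real.norm_eq_abs, abs_of_nonneg (C_nonneg hp (hψ0 x) (hf0 x))]
    exact C_ub hp (hψ0 x) (hub x) (hf0 x) (hfg x) (hzero x) (hψxm x)
  -- pointwise key inequality
  have hkey : ∀ x, f x ^ p / (p * (p-1)) - B / p * (g x ^ p - f x ^ p)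
      ≤ (∫ t in Set.Ioi (0:ℝ), t ^ (p-2) * ψ x t * f x)
        - ∫ t in Set.Ioi (0:ℝ), t ^ (p-1) * ψ x t := fun x =>
    key_ineq hp hB (hψ0 x) (hub x) (hf0 x) (hfg x) (hzero x) (hone x) (hψxm x)
  have hlhs_int : Integrable fun x => f x ^ p / (p * (p-1)) - B / p * (g x ^ p - f x ^ p) :=
    (hfp.div_const _).sub ((hgp.sub hfp).const_mul (B/p))
  have hmono := integral_mono hlhs_int (hCint.sub hAint) hkey
  simp only [Pi.sub_apply] at hmono
  rw [integral_sub hCint hAint] at hmono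
  have hsub : Integrable (fun x => g x ^ p - f x ^ p) := hgp.sub hfp
  have hmul : Integrable (fun x => B / p * (g x ^ p - f x ^ p)) := hsub.const_mul _
  have hdiv : Integrable (fun x => f x ^ p / (p * (p-1))) := hfp.div_const _
  rw [integral_sub hdiv hmul, integral_const_mul, integral_sub hgp hfp,
    integral_div] at hmono
  linarith [hmono, hbal]
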